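/- If f ∈ L¹ of the unit circle and D_n = det(f_{j-k})_{j,k=0}^{n-1} with f_j the Fourier coefficients of f, then D_n = det(I - K_n), where K_n is the integral operator on L²(C) with kernel K_n(z,z') = [(z/z')^n - 1]/(z - z') · (1 - f(z'))/(2πi). -/

import Mathlib

open MeasureTheory intervalIntegral

/-- Fourier coefficient `f_j = (1/2π)∫_0^{2π} f(e^{iθ}) e^{-ijθ} dθ`. -/
noncomputable def fCoeff (f : ℂ → ℂ) (j : ℤ) : ℂ :=
  (1 / (2 * Real.pi)) *
    ∫ θ in (0:ℝ)..(2 * Real.pi), f (Complex.exp (θ * Complex.I)) * Complex.exp (-j * θ * Complex.I)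

/-- The `n × n` Toeplitz determinant `D_n = det(f_{j-k})_{j,k=0}^{n-1}`. -/
noncomputable def toeplitzDet (f : ℂ → ℂ) (n : ℕ) : ℂ :=
  Matrix.det (Matrix.of fun j k : Fin n => fCoeff f ((j : ℤ) - (k : ℤ)))

/-- The kernel `K_n(z,z') = [((z/z')^n - 1)/(z - z')] (1 - f(z'))/(2πi)`,
with its (removable-singularity) value `n/z · (1-f(z))/(2πi)` on the diagonal. -/
noncomputable def isingKernel (f : ℂ → ℂ) (n : ℕ) (z z' : ℂ) : ℂ :=
  (if z = z' then (n : ℂ) / z else ((z / z') ^ n - 1) / (z - z')) * (1 - f z') /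
    (2 * Real.pi * Complex.I)

/-- The Fredholm determinant `det(I - K)` of an integral operator on `L²(C)` with continuous
kernel `K`, given by its series of multiple contour integrals over the unit circle `C`:
`det(I-K) = ∑_{m≥0} ((-1)^m/m!) ∮⋯∮ det(K(z_i,z_j))_{i,j=1}^m dz_1 ⋯ dz_m`. -/
noncomputable def fredholmDet (K : ℂ → ℂ → ℂ) : ℂ :=
  ∑' m : ℕ, ((-1 : ℂ) ^ m / (Nat.factorial m)) *
    ∫ θ : Fin m → ℝ in Set.pi Set.univ (fun _ : Fin m => Set.Ioc (0:ℝ) (2 * Real.pi)),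
      (Matrix.det (Matrix.of fun i j : Fin m =>
        K (Complex.exp (θ i * Complex.I)) (Complex.exp (θ j * Complex.I)))) *
      ∏ i : Fin m, (Complex.I * Complex.exp (θ i * Complex.I))

section Alg
variable {n : Type*} [DecidableEq n] [Fintype n]

/-- det(1+M) as a sum of principal minors. -/
lemma det_one_add_eq_sum_minors (M : Matrix n n ℂ) :
    (1 + M).det = ∑ s : Finset n,
      (M.submatrix (Subtype.val : {a // a ∈ s} → n) Subtype.val).det := by
  have h2 := (Matrix.detRowAlternating : (n → ℂ) [⋀^n]→ₗ[ℂ] ℂ).toMultilinearMap.map_add_univ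
      (fun i => M i) (fun i => (1 : Matrix n n ℂ) i)
  have h1 : (1 + M : Matrix n n ℂ).det
      = (Matrix.detRowAlternating : (n → ℂ) [⋀^n]→ₗ[ℂ] ℂ).toMultilinearMap
        ((fun i => M i) + (fun i => (1 : Matrix n n ℂ) i)) := by
    rw [add_comm]; rfl
  rw [h1, h2]
  refine Finset.sum_congr rfl fun s _ => ?_
  -- det of piecewise rows equals principal minor
  have key : (Matrix.of (s.piecewise (M : n → n → ℂ) (1 : Matrix n n ℂ))).det
      = (M.submatrix (Subtype.val : {a // a ∈ s} → n) Subtype.val).det := by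
    set e := Equiv.sumCompl (· ∈ s) with he
    rw [← Matrix.det_submatrix_equiv_self e]
    have : (Matrix.of (s.piecewise (M : n → n → ℂ) (1 : Matrix n n ℂ))).submatrix e e
        = Matrix.fromBlocks (M.submatrix Subtype.val Subtype.val)
            (M.submatrix Subtype.val Subtype.val) 0 1 := by
      ext i j
      cases i with
      | inl a =>
        have ha : (e (Sum.inl a) : n) ∈ s := a.2
        cases j with
        | inl b => simp [Matrix.submatrix, Finset.piecewise_eq_of_mem _ _ _ ha, Finset.piecewise, a.2, he]
        | inr b => simp [Matrix.submatrix, Finset.piecewise_eq_of_mem _ _ _ ha, Finset.piecewise, a.2, he]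
      | inr a =>
        cases j with
        | inl b =>
          have hne : (a : n) ≠ (b : n) := fun h => a.2 (h ▸ b.2)
          simp [Matrix.submatrix, Finset.piecewise, a.2, he,
            Matrix.one_apply, hne]
        | inr b =>
          simp only [Matrix.submatrix_apply, he, Equiv.sumCompl_apply_inr,
            Matrix.of_apply]
          simp only [Finset.piecewise, a.2, if_false, ↓reduceIte]
          by_cases hab : a = b
          · subst hab; simp [Matrix.one_apply, Matrix.fromBlocks]
          · have : (a : n) ≠ (b : n) := fun h => hab (Subtype.ext h)
            simp [Matrix.one_apply, this, Matrix.fromBlocks, hab]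
    rw [this, Matrix.det_fromBlocks_zero₂₁, Matrix.det_one, mul_one]
  rw [← key]; rfl
end Alg

section Count
open Finset

lemma det_submatrix_zero_of_not_injective {m N : ℕ} (A : Matrix (Fin N) (Fin N) ℂ)
    (r : Fin m → Fin N) (hr : ¬ Function.Injective r) : (A.submatrix r r).det = 0 := by
  rw [Function.not_injective_iff] at hr
  obtain ⟨i, j, hij, hne⟩ := hr
  exact Matrix.det_zero_of_row_eq hne (by funext k; simp [Matrix.submatrix, hij])

lemma sum_det_submatrix (m N : ℕ) (A : Matrix (Fin N) (Fin N) ℂ) :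
    ∑ r : Fin m → Fin N, (A.submatrix r r).det
      = (Nat.factorial m : ℂ) * ∑ s : Finset (Fin N),
          (if s.card = m
            then (A.submatrix (Subtype.val : {a // a ∈ s} → Fin N) Subtype.val).det else 0) := by
  classical
  have h0 : ∑ r ∈ Finset.univ.filter (fun r : Fin m → Fin N => Function.Injective r),
      (A.submatrix r r).det = ∑ r : Fin m → Fin N, (A.submatrix r r).det := by
    refine Finset.sum_filter_of_ne fun r _ hne => ?_
    by_contra h
    exact hne (det_submatrix_zero_of_not_injective A r h)
  rw [← h0]
  rw [← Finset.sum_fiberwise_of_maps_to (g := fun r : Fin m → Fin N => Finset.image r Finset.univ)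
      (t := Finset.univ) (fun r _ => Finset.mem_univ _)]
  rw [Finset.mul_sum]
  refine Finset.sum_congr rfl fun s _ => ?_
  by_cases h : s.card = m
  · -- all fibers terms equal the principal minor; fiber has m! elements
    rw [if_pos h]
    set es := s.orderIsoOfFin h with hes
    set D := (A.submatrix (Subtype.val : {a // a ∈ s} → Fin N) Subtype.val).det with hD
    have hterm : ∀ r ∈ (Finset.univ.filter (fun r : Fin m → Fin N => Function.Injective r)).filter
        (fun r => Finset.image r Finset.univ = s), (A.submatrix r r).det = D := by
      intro r hr
      simp only [Finset.mem_filter, Finset.mem_univ, true_and] at hr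
      obtain ⟨hinj, himg⟩ := hr
      have hmem : ∀ i, r i ∈ s := fun i => by
        rw [← himg]; exact Finset.mem_image_of_mem _ (Finset.mem_univ i)
      have hτinj : Function.Injective (fun i => es.symm ⟨r i, hmem i⟩) := by
        intro i j hij
        simp only at hij
        have := es.symm.injective hij
        exact hinj (congrArg Subtype.val this)
      set τ := Equiv.ofBijective _ (Finite.injective_iff_bijective.mp hτinj) with hτ
      have hkey : ∀ i, r i = ((es (τ i)) : Fin N) := by
        intro i
        have : es (τ i) = ⟨r i, hmem i⟩ := by
          rw [hτ]; simp [Equiv.ofBijective_apply, OrderIso.apply_symm_apply]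
        rw [this]
      have : A.submatrix r r
          = (A.submatrix (Subtype.val : {a // a ∈ s} → Fin N) Subtype.val).submatrix
              (⇑(τ.trans es.toEquiv)) (⇑(τ.trans es.toEquiv)) := by
        ext i j
        simp [Matrix.submatrix, hkey i, hkey j]
      rw [this, Matrix.det_submatrix_equiv_self]
    rw [Finset.sum_congr rfl hterm, Finset.sum_const]
    have hcard : ((Finset.univ.filter (fun r : Fin m → Fin N => Function.Injective r)).filter
        (fun r => Finset.image r Finset.univ = s)).card = Nat.factorial m := by
      have hbij : (Finset.univ : Finset (Equiv.Perm (Fin m))).card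
          = ((Finset.univ.filter (fun r : Fin m → Fin N => Function.Injective r)).filter
            (fun r => Finset.image r Finset.univ = s)).card := by
        refine Finset.card_bij (fun σ _ => fun i => ((es (σ i)) : Fin N)) ?_ ?_ ?_
        · intro σ _
          have hinj2 : Function.Injective (fun i => ((es (σ i)) : Fin N)) := by
            intro i j hij
            exact σ.injective (es.injective (Subtype.ext hij))
          simp only [Finset.mem_filter, Finset.mem_univ, true_and]
          refine ⟨hinj2, ?_⟩
          have hsub : Finset.image (fun i => ((es (σ i)) : Fin N)) Finset.univ ⊆ s := by
            intro a ha
            simp only [Finset.mem_image, Finset.mem_univ, true_and] at ha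
            obtain ⟨i, hi⟩ := ha
            rw [← hi]; exact (es (σ i)).2
          exact Finset.eq_of_subset_of_card_le hsub (by
            rw [Finset.card_image_of_injective _ hinj2, Finset.card_univ, Fintype.card_fin, h])
        · intro σ _ σ' _ hfun
          ext i : 1
          exact Fin.val_injective (congrArg Fin.val
            (es.injective (Subtype.ext (congrFun hfun i))))
        · intro r hr
          simp only [Finset.mem_filter, Finset.mem_univ, true_and] at hr
          obtain ⟨hinj, himg⟩ := hr
          have hmem : ∀ i, r i ∈ s := fun i => by
            rw [← himg]; exact Finset.mem_image_of_mem _ (Finset.mem_univ i)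
          have hτinj : Function.Injective (fun i => es.symm ⟨r i, hmem i⟩) := by
            intro i j hij
            simp only at hij
            exact hinj (congrArg Subtype.val (es.symm.injective hij))
          refine ⟨Equiv.ofBijective _ (Finite.injective_iff_bijective.mp hτinj),
            Finset.mem_univ _, ?_⟩
          funext i
          simp [Equiv.ofBijective_apply, OrderIso.apply_symm_apply]
      rw [← hbij, Finset.card_univ, Fintype.card_perm, Fintype.card_fin]
    rw [hcard, nsmul_eq_mul]
  · rw [if_neg h]
    rw [Finset.sum_eq_zero, mul_zero]
    intro r hr
    simp only [Finset.mem_filter, Finset.mem_univ, true_and] at hr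
    obtain ⟨hinj, himg⟩ := hr
    exact (h (by rw [← himg, Finset.card_image_of_injective _ hinj, Finset.card_univ,
      Fintype.card_fin])).elim
end Count

noncomputable def cc (θ : ℝ) : ℂ := Complex.exp (θ * Complex.I)

noncomputable def uF (k : ℕ) (θ : ℝ) : ℂ := Complex.exp ((k:ℂ) * θ * Complex.I)
noncomputable def vF (f : ℂ → ℂ) (k : ℕ) (θ : ℝ) : ℂ :=
  Complex.exp (-(k:ℂ) * θ * Complex.I) * (1 - f (cc θ)) / (2 * Real.pi)

lemma two_pi_pos : (0:ℝ) < 2 * Real.pi := by positivity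

lemma norm_exp_coe_mul_I (a : ℝ) : ‖Complex.exp ((a:ℂ) * Complex.I)‖ = 1 := by
  rw [Complex.norm_exp_ofReal_mul_I]

lemma integral_exp_int (m : ℤ) :
    (∫ θ in Set.Ioc (0:ℝ) (2*Real.pi), Complex.exp ((m:ℂ) * θ * Complex.I))
      = if m = 0 then (2*Real.pi : ℂ) else 0 := by
  rw [← intervalIntegral.integral_of_le two_pi_pos.le]
  by_cases hm : m = 0
  · subst hm; simp
  · rw [if_neg hm]
    have hc : ((m:ℂ) * Complex.I) ≠ 0 :=
      mul_ne_zero (Int.cast_ne_zero.mpr hm) Complex.I_ne_zero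
    have heq : ∀ θ : ℝ, (m:ℂ) * θ * Complex.I = ((m:ℂ) * Complex.I) * θ := fun θ => by ring
    simp_rw [heq]
    rw [integral_exp_mul_complex hc]
    have h1 : Complex.exp ((m:ℂ) * Complex.I * ((2*Real.pi : ℝ):ℂ)) = 1 := by
      rw [show (m:ℂ) * Complex.I * ((2*Real.pi : ℝ):ℂ) = m * (2 * Real.pi * Complex.I) by
        push_cast; ring]
      exact Complex.exp_int_mul_two_pi_mul_I m
    rw [show ((0:ℝ):ℂ) = 0 by norm_num] at *
    rw [h1]
    simp


section Integrab
variable {f : ℂ → ℂ}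

def HF (f : ℂ → ℂ) : Prop :=
  IntervalIntegrable (fun θ : ℝ => f (Complex.exp (θ * Complex.I))) volume 0 (2 * Real.pi)

lemma integrableOn_f (hf : HF f) :
    IntegrableOn (fun θ : ℝ => f (cc θ)) (Set.Ioc 0 (2*Real.pi)) volume :=
  (intervalIntegrable_iff_integrableOn_Ioc_of_le two_pi_pos.le).mp hf

lemma integrableOn_one_sub_f (hf : HF f) :
    IntegrableOn (fun θ : ℝ => 1 - f (cc θ)) (Set.Ioc 0 (2*Real.pi)) volume :=
  (integrableOn_const measure_Ioc_lt_top.ne).sub (integrableOn_f hf)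

lemma cont_exp_mul (a : ℂ) : Continuous fun θ : ℝ => Complex.exp (a * θ * Complex.I) := by
  fun_prop

lemma integrableOn_exp_mul_onesub (hf : HF f) (a : ℂ)
    (ha : ∃ b : ℝ, ∀ θ : ℝ, a * θ * Complex.I = ((b * θ : ℝ):ℂ) * Complex.I) :
    IntegrableOn (fun θ : ℝ => Complex.exp (a * θ * Complex.I) * (1 - f (cc θ)))
      (Set.Ioc 0 (2*Real.pi)) volume := by
  obtain ⟨b, hb⟩ := ha
  refine (integrableOn_one_sub_f hf).bdd_mul
    ((cont_exp_mul a).aestronglyMeasurable.restrict) (c := 1) (Filter.Eventually.of_forall fun θ => ?_)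
  rw [hb θ, norm_exp_coe_mul_I]

lemma integrableOn_vF (hf : HF f) (k : ℕ) :
    IntegrableOn (vF f k) (Set.Ioc 0 (2*Real.pi)) volume := by
  have h1 := (integrableOn_exp_mul_onesub hf (-(k:ℂ))
    ⟨-(k:ℝ), fun θ => by push_cast; ring⟩).div_const (2*Real.pi)
  exact h1

lemma integrableOn_uv (hf : HF f) (k l : ℕ) :
    IntegrableOn (fun θ => uF l θ * vF f k θ) (Set.Ioc 0 (2*Real.pi)) volume := by
  refine (integrableOn_vF hf k).bdd_mul
    ((cont_exp_mul (l:ℂ)).aestronglyMeasurable.restrict) (c := 1) (Filter.Eventually.of_forall fun θ => ?_)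
  show ‖Complex.exp ((l:ℂ) * θ * Complex.I)‖ ≤ 1
  rw [show ((l:ℂ) * θ * Complex.I) = (((l * θ : ℝ)):ℂ) * Complex.I by push_cast; ring,
    norm_exp_coe_mul_I]
end Integrab

lemma entry_integral {f : ℂ → ℂ} (hf : HF f) (k l : ℕ) :
    (∫ θ in Set.Ioc (0:ℝ) (2*Real.pi), uF l θ * vF f k θ)
      = (if k = l then 1 else 0) - fCoeff f ((k:ℤ) - (l:ℤ)) := by
  set m : ℤ := (l:ℤ) - (k:ℤ) with hmdef
  have hm : ∀ θ : ℝ, uF l θ * vF f k θ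
      = Complex.exp ((m:ℂ) * θ * Complex.I) * (1 - f (cc θ)) / (2*Real.pi) := by
    intro θ
    have hexp : Complex.exp ((l:ℂ)*θ*Complex.I) * Complex.exp (-(k:ℂ)*θ*Complex.I)
        = Complex.exp ((m:ℂ)*θ*Complex.I) := by
      rw [← Complex.exp_add]; congr 1; rw [hmdef]; push_cast; ring
    calc uF l θ * vF f k θ
        = (Complex.exp ((l:ℂ)*θ*Complex.I) * Complex.exp (-(k:ℂ)*θ*Complex.I))
            * (1 - f (cc θ)) / (2*Real.pi) := by unfold uF vF; ring
      _ = _ := by rw [hexp]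
  simp_rw [hm]
  have hsplit : ∀ θ : ℝ, Complex.exp ((m:ℂ)*θ*Complex.I) * (1 - f (cc θ)) / (2*Real.pi)
      = Complex.exp ((m:ℂ)*θ*Complex.I) / (2*Real.pi)
        - Complex.exp ((m:ℂ)*θ*Complex.I) * f (cc θ) / (2*Real.pi) := fun θ => by ring
  simp_rw [hsplit]
  have h2pi : ((2*Real.pi : ℝ):ℂ) ≠ 0 := by
    simp only [Complex.ofReal_ne_zero]; exact two_pi_pos.ne'
  have h1 : IntegrableOn (fun θ : ℝ => Complex.exp ((m:ℂ)*θ*Complex.I) / (2*Real.pi))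
      (Set.Ioc 0 (2*Real.pi)) volume :=
    ((cont_exp_mul (m:ℂ)).integrableOn_Ioc).div_const _
  have h2 : IntegrableOn (fun θ : ℝ => Complex.exp ((m:ℂ)*θ*Complex.I) * f (cc θ) / (2*Real.pi))
      (Set.Ioc 0 (2*Real.pi)) volume := by
    refine (((integrableOn_f hf).bdd_mul
      ((cont_exp_mul (m:ℂ)).aestronglyMeasurable.restrict) (c := 1) (Filter.Eventually.of_forall fun θ => ?_)).div_const _)
    show ‖Complex.exp ((m:ℂ) * θ * Complex.I)‖ ≤ 1
    rw [show ((m:ℂ) * θ * Complex.I) = (((m * θ : ℝ)):ℂ) * Complex.I by push_cast; ring,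
      norm_exp_coe_mul_I]
  rw [MeasureTheory.integral_sub h1 h2]
  congr 1
  · -- first piece
    rw [MeasureTheory.integral_div, integral_exp_int]
    by_cases hkl : k = l
    · rw [if_pos hkl, if_pos (by omega : m = 0)]
      exact div_self (by simp [Real.pi_ne_zero])
    · rw [if_neg hkl, if_neg (by omega : ¬ m = 0), zero_div]
  · -- second piece is the Fourier coefficient
    rw [fCoeff, intervalIntegral.integral_of_le two_pi_pos.le]
    have : ∀ θ : ℝ, Complex.exp ((m:ℂ)*θ*Complex.I) * f (cc θ) / (2*Real.pi)
        = (1/(2*Real.pi : ℝ) : ℂ) * (f (Complex.exp (θ * Complex.I))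
            * Complex.exp (-(((k:ℤ)-(l:ℤ) : ℤ):ℂ) * θ * Complex.I)) := by
      intro θ
      rw [show (-(((k:ℤ)-(l:ℤ) : ℤ):ℂ)) = (m:ℂ) by rw [hmdef]; push_cast; ring]
      rw [cc]
      push_cast
      ring
    simp_rw [this]
    rw [MeasureTheory.integral_const_mul]
    norm_num

lemma geom_key (n : ℕ) (z z' : ℂ) (hz : z ≠ 0) (hz' : z' ≠ 0) :
    (if z = z' then (n : ℂ) / z else ((z / z') ^ n - 1) / (z - z')) * z'
      = ∑ k ∈ Finset.range n, (z / z') ^ k := by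
  by_cases hzz : z = z'
  · rw [if_pos hzz, hzz, div_self hz', div_mul_eq_mul_div, mul_div_assoc,
      div_self hz', mul_one]
    simp
  · rw [if_neg hzz]
    have hw1 : z / z' ≠ 1 := fun h => hzz (by field_simp at h; exact h)
    rw [geom_sum_eq hw1]
    have hsub : z - z' ≠ 0 := sub_ne_zero.mpr hzz
    field_simp

lemma kernel_expand (f : ℂ → ℂ) (n : ℕ) (θ θ' : ℝ) :
    isingKernel f n (cc θ) (cc θ') * (Complex.I * cc θ')
      = ∑ k : Fin n, uF k θ * vF f k θ' := by
  have hz : cc θ ≠ 0 := Complex.exp_ne_zero _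
  have hz' : cc θ' ≠ 0 := Complex.exp_ne_zero _
  have hratio : ∀ k : ℕ, uF k θ * vF f k θ' = (cc θ / cc θ') ^ k * ((1 - f (cc θ')) / (2*Real.pi)) := by
    intro k
    have h1 : cc θ / cc θ' = Complex.exp (((θ - θ' : ℝ):ℂ) * Complex.I) := by
      rw [cc, cc, ← Complex.exp_sub]; congr 1; push_cast; ring
    have h2 : (cc θ / cc θ') ^ k
        = Complex.exp ((k:ℂ)*θ*Complex.I) * Complex.exp (-(k:ℂ)*θ'*Complex.I) := by
      rw [h1, ← Complex.exp_nat_mul, ← Complex.exp_add]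
      congr 1; push_cast; ring
    rw [h2]; unfold uF vF; ring
  simp_rw [hratio]
  rw [Fin.sum_univ_eq_sum_range (fun k => (cc θ / cc θ') ^ k * ((1 - f (cc θ')) / (2*Real.pi))),
    ← Finset.sum_mul, ← geom_key n (cc θ) (cc θ') hz hz']
  rw [isingKernel]
  have hI : Complex.I ≠ 0 := Complex.I_ne_zero
  have hpi : (Real.pi : ℂ) ≠ 0 := by simp [Real.pi_ne_zero]
  field_simp

lemma indicator_pi_prod {m : ℕ} (S : Set ℝ) (g : Fin m → ℝ → ℂ) (θ : Fin m → ℝ) :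
    (Set.pi Set.univ (fun _ : Fin m => S)).indicator (fun θ => ∏ i, g i (θ i)) θ
      = ∏ i, S.indicator (g i) (θ i) := by
  by_cases hθ : θ ∈ Set.pi Set.univ (fun _ : Fin m => S)
  · rw [Set.indicator_of_mem hθ]
    exact Finset.prod_congr rfl fun i _ =>
      (Set.indicator_of_mem (hθ i trivial) _).symm
  · rw [Set.indicator_of_notMem hθ]
    have : ∃ i, θ i ∉ S := by simpa [Set.mem_pi] using hθ
    obtain ⟨i, hi⟩ := this
    exact (Finset.prod_eq_zero (Finset.mem_univ i) (Set.indicator_of_notMem hi _)).symm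

lemma integral_pi_Ioc {m : ℕ} (g : Fin m → ℝ → ℂ) :
    (∫ θ : Fin m → ℝ in Set.pi Set.univ (fun _ : Fin m => Set.Ioc (0:ℝ) (2*Real.pi)),
        ∏ i, g i (θ i))
      = ∏ i, ∫ θ in Set.Ioc (0:ℝ) (2*Real.pi), g i θ := by
  rw [← MeasureTheory.integral_indicator (MeasurableSet.univ_pi fun _ => measurableSet_Ioc)]
  simp_rw [indicator_pi_prod]
  rw [MeasureTheory.volume_pi, MeasureTheory.integral_fintype_prod_eq_prod
    (f := fun (_ : Fin m) θ => (Set.Ioc (0:ℝ) (2*Real.pi)).indicator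
      (g _) θ)]
  exact Finset.prod_congr rfl fun i _ =>
    MeasureTheory.integral_indicator measurableSet_Ioc

lemma integrableOn_pi_Ioc {m : ℕ} (g : Fin m → ℝ → ℂ)
    (hg : ∀ i, IntegrableOn (g i) (Set.Ioc (0:ℝ) (2*Real.pi)) volume) :
    IntegrableOn (fun θ : Fin m → ℝ => ∏ i, g i (θ i))
      (Set.pi Set.univ (fun _ : Fin m => Set.Ioc (0:ℝ) (2*Real.pi))) volume := by
  rw [← integrable_indicator_iff (MeasurableSet.univ_pi fun _ => measurableSet_Ioc)]
  have heq : (Set.pi Set.univ (fun _ : Fin m => Set.Ioc (0:ℝ) (2*Real.pi))).indicator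
      (fun θ : Fin m → ℝ => ∏ i, g i (θ i))
      = fun θ => ∏ i, (Set.Ioc (0:ℝ) (2*Real.pi)).indicator (g i) (θ i) :=
    funext (indicator_pi_prod _ g)
  rw [heq]
  exact MeasureTheory.Integrable.fintype_prod_dep fun i =>
    (integrable_indicator_iff measurableSet_Ioc).mpr (hg i)

noncomputable def Amat (f : ℂ → ℂ) (n : ℕ) : Matrix (Fin n) (Fin n) ℂ :=
  Matrix.of fun k l => (if k = l then (1:ℂ) else 0) - fCoeff f ((k:ℤ) - (l:ℤ))

lemma det_sum_expand {n m : ℕ} (f : ℂ → ℂ) (θ : Fin m → ℝ) :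
    (Matrix.of fun i j : Fin m => ∑ k : Fin n, uF k (θ i) * vF f k (θ j)).det
      = ∑ r : Fin m → Fin n, (∏ i, uF (r i) (θ i))
          * (Matrix.of fun i j : Fin m => vF f (r i) (θ j)).det := by
  have key := (Matrix.detRowAlternating :
      (Fin m → ℂ) [⋀^Fin m]→ₗ[ℂ] ℂ).toMultilinearMap.map_sum
    (g := fun i (k : Fin n) => fun j => uF k (θ i) * vF f k (θ j))
  have hrow : (fun i => (Matrix.of fun i j : Fin m => ∑ k : Fin n, uF k (θ i) * vF f k (θ j)) i)
      = fun i => ∑ k : Fin n, (fun j => uF k (θ i) * vF f k (θ j)) := by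
    funext i j
    simp [Finset.sum_apply]
  show (Matrix.detRowAlternating : (Fin m → ℂ) [⋀^Fin m]→ₗ[ℂ] ℂ).toMultilinearMap
      (fun i => (Matrix.of fun i j : Fin m => ∑ k : Fin n, uF k (θ i) * vF f k (θ j)) i) = _
  rw [hrow, key]
  refine Finset.sum_congr rfl fun r _ => ?_
  have h2 : (fun i => (fun j => uF (r i) (θ i) * vF f (r i) (θ j)))
      = fun i => uF (r i) (θ i) • (fun j => vF f (r i) (θ j)) := by
    funext i j; simp [smul_eq_mul]
  rw [h2, MultilinearMap.map_smul_univ]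
  rw [smul_eq_mul]
  rfl

lemma multi_integral (f : ℂ → ℂ) (hf : HF f) (n m : ℕ) :
    (∫ θ : Fin m → ℝ in Set.pi Set.univ (fun _ : Fin m => Set.Ioc (0:ℝ) (2 * Real.pi)),
      (Matrix.det (Matrix.of fun i j : Fin m =>
        isingKernel f n (Complex.exp (θ i * Complex.I)) (Complex.exp (θ j * Complex.I)))) *
      ∏ i : Fin m, (Complex.I * Complex.exp (θ i * Complex.I)))
    = ∑ r : Fin m → Fin n, ((Amat f n).submatrix r r).det := by
  classical
  have hpt : ∀ θ : Fin m → ℝ,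
      (Matrix.det (Matrix.of fun i j : Fin m =>
        isingKernel f n (Complex.exp (θ i * Complex.I)) (Complex.exp (θ j * Complex.I)))) *
      ∏ i : Fin m, (Complex.I * Complex.exp (θ i * Complex.I))
      = ∑ r : Fin m → Fin n, ∑ σ : Equiv.Perm (Fin m),
          (((Equiv.Perm.sign σ : ℤ)) : ℂ) *
            ∏ j, (uF (r j) (θ j) * vF f (r (σ j)) (θ j)) := by
    intro θ
    rw [mul_comm, ← Matrix.det_mul_row (fun j => Complex.I * Complex.exp (θ j * Complex.I))]
    have hentry : (Matrix.of fun i j : Fin m =>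
        (Complex.I * Complex.exp (θ j * Complex.I)) *
          (Matrix.of fun i j : Fin m => isingKernel f n (Complex.exp (θ i * Complex.I))
            (Complex.exp (θ j * Complex.I))) i j)
        = Matrix.of fun i j : Fin m => ∑ k : Fin n, uF k (θ i) * vF f k (θ j) := by
      ext i j
      simp only [Matrix.of_apply]
      rw [mul_comm]
      exact kernel_expand f n (θ i) (θ j)
    rw [hentry, det_sum_expand]
    refine Finset.sum_congr rfl fun r _ => ?_
    rw [Matrix.det_apply', Finset.mul_sum]
    refine Finset.sum_congr rfl fun σ _ => ?_
    rw [Finset.prod_mul_distrib]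
    simp only [Matrix.of_apply]
    ring
  rw [show (fun θ : Fin m → ℝ =>
      (Matrix.det (Matrix.of fun i j : Fin m =>
        isingKernel f n (Complex.exp (θ i * Complex.I)) (Complex.exp (θ j * Complex.I)))) *
      ∏ i : Fin m, (Complex.I * Complex.exp (θ i * Complex.I)))
    = fun θ => ∑ r : Fin m → Fin n, ∑ σ : Equiv.Perm (Fin m),
          (((Equiv.Perm.sign σ : ℤ)) : ℂ) *
            ∏ j, (uF (r j) (θ j) * vF f (r (σ j)) (θ j)) from funext hpt]
  have hint : ∀ (r : Fin m → Fin n) (σ : Equiv.Perm (Fin m)),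
      IntegrableOn (fun θ : Fin m → ℝ => (((Equiv.Perm.sign σ : ℤ)) : ℂ) *
          ∏ j, (uF (r j) (θ j) * vF f (r (σ j)) (θ j)))
        (Set.pi Set.univ (fun _ : Fin m => Set.Ioc (0:ℝ) (2 * Real.pi))) volume :=
    fun r σ => (integrableOn_pi_Ioc _
      (fun j => integrableOn_uv hf (r (σ j)) (r j))).const_mul _
  rw [MeasureTheory.integral_finset_sum Finset.univ
    (fun r _ => MeasureTheory.integrable_finset_sum _ (fun σ _ => hint r σ))]
  refine Finset.sum_congr rfl fun r _ => ?_
  rw [MeasureTheory.integral_finset_sum Finset.univ (fun σ _ => hint r σ),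
    Matrix.det_apply']
  refine Finset.sum_congr rfl fun σ _ => ?_
  rw [MeasureTheory.integral_const_mul,
    integral_pi_Ioc (fun j => fun x => uF (↑(r j)) x * vF f (↑(r (σ j))) x)]
  congr 1
  refine Finset.prod_congr rfl fun j _ => ?_
  rw [entry_integral hf (r (σ j)) (r j)]
  simp [Amat, Matrix.submatrix_apply, Fin.val_inj]

/-- If `f ∈ L¹(C)` then the Toeplitz determinant `D_n = det(f_{j-k})_{j,k=0}^{n-1}` equals the
Fredholm determinant `det(I - K_n)` of the integral operator on `L²(C)` with kernel
`K_n(z,z') = [(z/z')^n - 1]/(z-z') · (1-f(z'))/(2πi)`. -/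
theorem toeplitzDet_eq_fredholmDet (f : ℂ → ℂ)
    (hf : IntervalIntegrable (fun θ : ℝ => f (Complex.exp (θ * Complex.I))) volume 0 (2 * Real.pi))
    (n : ℕ) :
    toeplitzDet f n = fredholmDet (isingKernel f n) := by
  classical
  have hfH : HF f := hf
  set Ds : Finset (Fin n) → ℂ := fun s =>
    ((Amat f n).submatrix (Subtype.val : {a // a ∈ s} → Fin n) Subtype.val).det with hDs
  have hm_ne : ∀ m : ℕ, ((Nat.factorial m : ℂ)) ≠ 0 :=
    fun m => Nat.cast_ne_zero.mpr (Nat.factorial_ne_zero m)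
  have hbody : ∀ m : ℕ, ((-1 : ℂ) ^ m / (Nat.factorial m)) *
      (∫ θ : Fin m → ℝ in Set.pi Set.univ (fun _ : Fin m => Set.Ioc (0:ℝ) (2 * Real.pi)),
        (Matrix.det (Matrix.of fun i j : Fin m =>
          isingKernel f n (Complex.exp (θ i * Complex.I)) (Complex.exp (θ j * Complex.I)))) *
        ∏ i : Fin m, (Complex.I * Complex.exp (θ i * Complex.I)))
      = (-1:ℂ)^m * ∑ s : Finset (Fin n), (if s.card = m then Ds s else 0) := by
    intro m
    rw [multi_integral f hfH n m, sum_det_submatrix]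
    rw [div_mul_eq_mul_div, mul_comm ((Nat.factorial m : ℂ)), mul_div_assoc,
      mul_div_assoc, div_self (hm_ne m), mul_one]
  rw [fredholmDet]
  have htsum : (∑' m : ℕ, ((-1 : ℂ) ^ m / (Nat.factorial m)) *
      (∫ θ : Fin m → ℝ in Set.pi Set.univ (fun _ : Fin m => Set.Ioc (0:ℝ) (2 * Real.pi)),
        (Matrix.det (Matrix.of fun i j : Fin m =>
          isingKernel f n (Complex.exp (θ i * Complex.I)) (Complex.exp (θ j * Complex.I)))) *
        ∏ i : Fin m, (Complex.I * Complex.exp (θ i * Complex.I))))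
      = ∑ m ∈ Finset.range (n+1),
          (-1:ℂ)^m * ∑ s : Finset (Fin n), (if s.card = m then Ds s else 0) := by
    rw [← Finset.sum_congr rfl (fun m _ => hbody m)]
    refine tsum_eq_sum fun m hm => ?_
    rw [hbody m]
    have hnm : n < m := by simpa [Finset.mem_range] using hm
    rw [Finset.sum_eq_zero, mul_zero]
    intro s _
    have : s.card ≤ n := by
      have := Finset.card_le_univ s
      simpa using this
    exact if_neg (by omega)
  rw [htsum]
  have hswap : (∑ m ∈ Finset.range (n+1),
        (-1:ℂ)^m * ∑ s : Finset (Fin n), (if s.card = m then Ds s else 0))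
      = ∑ s : Finset (Fin n), (-1:ℂ)^(s.card) * Ds s := by
    have h1 : ∀ m ∈ Finset.range (n+1), (-1:ℂ)^m * ∑ s : Finset (Fin n),
        (if s.card = m then Ds s else 0)
        = ∑ s : Finset (Fin n), (if s.card = m then (-1:ℂ)^(s.card) * Ds s else 0) := by
      intro m _
      rw [Finset.mul_sum]
      refine Finset.sum_congr rfl fun s _ => ?_
      split_ifs with h
      · rw [h]
      · rw [mul_zero]
    rw [Finset.sum_congr rfl h1, Finset.sum_comm]
    refine Finset.sum_congr rfl fun s _ => ?_
    have hcard : s.card ∈ Finset.range (n+1) := by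
      have := Finset.card_le_univ s
      simp only [Finset.mem_range]
      simp at this
      omega
    rw [Finset.sum_ite_eq (Finset.range (n+1)) s.card
      (fun _ => (-1:ℂ)^(s.card) * Ds s), if_pos hcard]
  rw [hswap]
  have hneg : ∀ s : Finset (Fin n), (-1:ℂ)^(s.card) * Ds s
      = (((-(Amat f n)).submatrix (Subtype.val : {a // a ∈ s} → Fin n) Subtype.val)).det := by
    intro s
    have : ((-(Amat f n)).submatrix (Subtype.val : {a // a ∈ s} → Fin n)
          (Subtype.val : {a // a ∈ s} → Fin n))
        = -((Amat f n).submatrix (Subtype.val : {a // a ∈ s} → Fin n)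
          (Subtype.val : {a // a ∈ s} → Fin n)) := by
      ext i j; simp
    rw [this, Matrix.det_neg, Fintype.card_coe]
  rw [Finset.sum_congr rfl (fun s _ => hneg s), ← det_one_add_eq_sum_minors]
  have hfinal : (1 + -(Amat f n)) = Matrix.of fun j k : Fin n => fCoeff f ((j : ℤ) - (k : ℤ)) := by
    ext j k
    simp only [Matrix.add_apply, Matrix.neg_apply, Amat, Matrix.of_apply, Matrix.one_apply]
    split_ifs with h
    · ring
    · ring
  rw [hfinal, toeplitzDet]
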